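/- (Identifiability of Sloth with identity skill covariance) Let X ∈ ℝ^{n×p} have rank p, Λ, Λ̃ ∈ ℝ^{J×d} have rank d, b, b̃ ∈ ℝ^J, and B, B̃ ∈ ℝ^{p×d}. Assume the rows θ⁽ⁱ⁾ of XB satisfy (1/n)Σᵢ θ⁽ⁱ⁾ = 0 and (1/n)Σᵢ θ⁽ⁱ⁾ᵀθ⁽ⁱ⁾ = I_d, and similarly for the rows of XB̃. If Λ (XB)⁽ⁱ⁾ᵀ + b = Λ̃ (XB̃)⁽ⁱ⁾ᵀ + b̃ for all i ∈ [n], then b̃ = b, and there exists an orthogonal matrix M ∈ ℝ^{d×d} such that Λ̃ = Λ M and B̃ = B M. -/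

import Mathlib

open Matrix

private lemma sq_isUnit_of_rank {d : ℕ} (A : Matrix (Fin d) (Fin d) ℝ) (h : A.rank = d) :
    IsUnit A := by
  rw [← mulVec_surjective_iff_isUnit]
  have : LinearMap.range A.mulVecLin = ⊤ := by
    apply Submodule.eq_top_of_finrank_eq
    rw [← Matrix.rank, h]; simp
  intro y
  exact (LinearMap.range_eq_top.mp this) y

private lemma gram_isUnit {J d : ℕ} (A : Matrix (Fin J) (Fin d) ℝ) (h : A.rank = d) :
    IsUnit (Aᵀ * A) := by
  apply sq_isUnit_of_rank
  have hct : Aᴴ = Aᵀ := by ext i j; simp [conjTranspose_apply]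
  rw [← hct, Matrix.rank_conjTranspose_mul_self, h]

private lemma cancel_right {m J d : ℕ} (A : Matrix (Fin J) (Fin d) ℝ)
    (hA : IsUnit (Aᵀ * A)) (P Q : Matrix (Fin m) (Fin d) ℝ)
    (h : P * Aᵀ = Q * Aᵀ) : P = Q := by
  have h2 : P * (Aᵀ * A) = Q * (Aᵀ * A) := by
    rw [← Matrix.mul_assoc, ← Matrix.mul_assoc, h]
  obtain ⟨u, hu⟩ := hA
  rw [← hu] at h2
  have h3 : P * u.val * (u⁻¹).val = Q * u.val * (u⁻¹).val := by rw [h2]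
  rwa [Matrix.mul_assoc, Matrix.mul_assoc, ← Units.val_mul, mul_inv_cancel,
    Units.val_one, Matrix.mul_one, Matrix.mul_one] at h3

private lemma cancel_left {m J d : ℕ} (A : Matrix (Fin J) (Fin d) ℝ)
    (hA : IsUnit (Aᵀ * A)) (P Q : Matrix (Fin d) (Fin m) ℝ)
    (h : A * P = A * Q) : P = Q := by
  have h2 : (Aᵀ * A) * P = (Aᵀ * A) * Q := by
    rw [Matrix.mul_assoc, Matrix.mul_assoc, h]
  obtain ⟨u, hu⟩ := hA
  rw [← hu] at h2
  have h3 : (u⁻¹).val * (u.val * P) = (u⁻¹).val * (u.val * Q) := by rw [h2]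
  rwa [← Matrix.mul_assoc, ← Matrix.mul_assoc, ← Units.val_mul, inv_mul_cancel,
    Units.val_one, Matrix.one_mul, Matrix.one_mul] at h3

theorem stmt_8 (n p J d : ℕ) (hn : 0 < n)
    (X : Matrix (Fin n) (Fin p) ℝ)
    (Λ Λ' : Matrix (Fin J) (Fin d) ℝ)
    (b b' : Fin J → ℝ)
    (B B' : Matrix (Fin p) (Fin d) ℝ)
    (hX : X.rank = p) (hΛ : Λ.rank = d) (hΛ' : Λ'.rank = d)
    (hmean : (1 / (n : ℝ)) • ∑ i, (X * B) i = 0)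
    (hcov : (1 / (n : ℝ)) • ((X * B)ᵀ * (X * B)) = 1)
    (hmean' : (1 / (n : ℝ)) • ∑ i, (X * B') i = 0)
    (hcov' : (1 / (n : ℝ)) • ((X * B')ᵀ * (X * B')) = 1)
    (heq : ∀ i, Λ.mulVec ((X * B) i) + b = Λ'.mulVec ((X * B') i) + b') :
    b' = b ∧ ∃ M : Matrix (Fin d) (Fin d) ℝ,
      Mᵀ * M = 1 ∧ M * Mᵀ = 1 ∧ Λ' = Λ * M ∧ B' = B * M := by
  set Θ := X * B with hΘdef
  set Θ' := X * B' with hΘ'def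
  have hnR : (n : ℝ) ≠ 0 := Nat.cast_ne_zero.mpr hn.ne'
  have hfrac : (1 / (n : ℝ)) ≠ 0 := by positivity
  have hsum0 : ∑ i, Θ i = 0 := by
    rcases smul_eq_zero.mp hmean with h | h
    · exact absurd h hfrac
    · exact h
  have hsum0' : ∑ i, Θ' i = 0 := by
    rcases smul_eq_zero.mp hmean' with h | h
    · exact absurd h hfrac
    · exact h
  -- b = b'
  have hbsum : ∑ i : Fin n, (Λ.mulVec (Θ i) + b) = ∑ i : Fin n, (Λ'.mulVec (Θ' i) + b') :=
    Finset.sum_congr rfl fun i _ => heq i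
  have hmvsum : ∀ (A : Matrix (Fin J) (Fin d) ℝ) (v : Fin n → Fin d → ℝ),
      ∑ i, A.mulVec (v i) = A.mulVec (∑ i, v i) := by
    intro A v
    simpa only [mulVecLin_apply] using (map_sum A.mulVecLin v Finset.univ).symm
  have hb : b' = b := by
    have h1 : (n : ℕ) • b = (n : ℕ) • b' := by
      have h0 := hbsum
      rw [Finset.sum_add_distrib, Finset.sum_add_distrib, hmvsum Λ Θ, hmvsum Λ' Θ',
        hsum0, hsum0', Matrix.mulVec_zero, Matrix.mulVec_zero, zero_add, zero_add] at h0
      simpa only [Finset.sum_const, Finset.card_univ, Fintype.card_fin] using h0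
    funext j
    have h2 := congrFun h1 j
    simp only [Pi.smul_apply, nsmul_eq_mul] at h2
    exact (mul_left_cancel₀ hnR h2).symm
  subst hb
  have heq2 : ∀ i, Λ.mulVec (Θ i) = Λ'.mulVec (Θ' i) := fun i => add_right_cancel (heq i)
  have hM : Θ * Λᵀ = Θ' * Λ'ᵀ := by
    ext i j
    have h3 := congrFun (heq2 i) j
    simpa [Matrix.mul_apply, Matrix.mulVec, dotProduct, mul_comm] using h3
  set C : Matrix (Fin d) (Fin d) ℝ := (1 / (n : ℝ)) • (Θᵀ * Θ') with hCdef
  have hCT : Cᵀ = (1 / (n : ℝ)) • (Θ'ᵀ * Θ) := by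
    rw [hCdef, Matrix.transpose_smul, Matrix.transpose_mul, Matrix.transpose_transpose]
  have hC1 : Λᵀ = C * Λ'ᵀ := by
    calc Λᵀ = ((1 / (n : ℝ)) • (Θᵀ * Θ)) * Λᵀ := by rw [hcov, Matrix.one_mul]
    _ = (1 / (n : ℝ)) • (Θᵀ * (Θ * Λᵀ)) := by rw [Matrix.smul_mul, Matrix.mul_assoc Θᵀ Θ Λᵀ]
    _ = (1 / (n : ℝ)) • (Θᵀ * (Θ' * Λ'ᵀ)) := by rw [hM]
    _ = C * Λ'ᵀ := by rw [hCdef, Matrix.smul_mul, Matrix.mul_assoc Θᵀ Θ' Λ'ᵀ]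
  have hC2 : Λ'ᵀ = Cᵀ * Λᵀ := by
    calc Λ'ᵀ = ((1 / (n : ℝ)) • (Θ'ᵀ * Θ')) * Λ'ᵀ := by rw [hcov', Matrix.one_mul]
    _ = (1 / (n : ℝ)) • (Θ'ᵀ * (Θ' * Λ'ᵀ)) := by rw [Matrix.smul_mul, Matrix.mul_assoc Θ'ᵀ Θ' Λ'ᵀ]
    _ = (1 / (n : ℝ)) • (Θ'ᵀ * (Θ * Λᵀ)) := by rw [hM]
    _ = Cᵀ * Λᵀ := by rw [hCT, Matrix.smul_mul, Matrix.mul_assoc Θ'ᵀ Θ Λᵀ]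
  have hunit' : IsUnit (Λ'ᵀ * Λ') := gram_isUnit Λ' hΛ'
  have hunitX : IsUnit (Xᵀ * X) := gram_isUnit X hX
  have hCC : Cᵀ * C = 1 := by
    apply cancel_right Λ' hunit'
    rw [Matrix.mul_assoc Cᵀ C Λ'ᵀ, ← hC1, ← hC2, Matrix.one_mul]
  have hCC2 : C * Cᵀ = 1 := mul_eq_one_comm.mp hCC
  have hΛ'C : Λ' = Λ * C := by
    have h4 := congrArg Matrix.transpose hC2
    rwa [Matrix.transpose_transpose, Matrix.transpose_mul, Matrix.transpose_transpose] at h4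
  have hΘC : Θ * C = Θ' := by
    apply cancel_right Λ' hunit'
    rw [Matrix.mul_assoc Θ C Λ'ᵀ, ← hC1, hM]
  have hB'C : B' = B * C := by
    apply cancel_left X hunitX
    rw [← Matrix.mul_assoc X B C, ← hΘ'def, ← hΘC, hΘdef]
  exact ⟨rfl, C, hCC, hCC2, hΛ'C, hB'C⟩
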